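/- Let G be a strongly connected multidigraph with incidence matrix C (rows indexed by nodes, columns by edges, with entry 1 if the node is the target of the edge and not its source, −1 if the node is the source and not the target, 0 otherwise). Let H be the matrix whose rows are the indicator vectors ν_σ ∈ {0,1}^E of the elementary cycles σ of G. Then ker H = im Cᵗ. -/

import Mathlib

/-- A multidigraph: a set of nodes `V`, a set of edges `E`, and source/target maps. -/
structure Multidigraph (V E : Type*) where
  src : E → V
  tgt : E → V

namespace Multidigraph

variable {V E : Type*}

/-- One-step edge relation using only the edges in `τ`. -/
def Rel (G : Multidigraph V E) (τ : Set E) (a b : V) : Prop :=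
  ∃ e ∈ τ, G.src e = a ∧ G.tgt e = b

/-- Undirected (symmetrized) one-step relation. -/
def URel (G : Multidigraph V E) (a b : V) : Prop :=
  G.Rel Set.univ a b ∨ G.Rel Set.univ b a

/-- Node set of the (weakly) connected component containing `v`. -/
def component (G : Multidigraph V E) (v : V) : Set V :=
  {w | Relation.ReflTransGen G.URel v w}

/-- `τ` is a spanning tree of the subgraph of `G` induced on the node set `W`,
rooted at `r`: all edges stay inside `W`, every non-root node of `W` has exactly
one outgoing edge in `τ`, the root has none, and every node of `W` reaches `r`
through `τ`. -/
def IsSpanningTreeOn (G : Multidigraph V E) (W : Set V) (τ : Finset E) (r : V) : Prop :=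
  (∀ e ∈ τ, G.src e ∈ W ∧ G.tgt e ∈ W) ∧
  (∀ v ∈ W, v ≠ r → ∃! e, e ∈ τ ∧ G.src e = v) ∧
  (∀ e ∈ τ, G.src e ≠ r) ∧
  (∀ v ∈ W, Relation.ReflTransGen (G.Rel (τ : Set E)) v r)

/-- Spanning tree of `G` rooted at `r`. -/
def IsSpanningTree (G : Multidigraph V E) (τ : Finset E) (r : V) : Prop :=
  G.IsSpanningTreeOn Set.univ τ r

/-- A cycle: a nonempty closed directed path with pairwise distinct nodes. -/
def IsCycle (G : Multidigraph V E) (l : List E) : Prop :=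
  l ≠ [] ∧ (l.map G.src).Nodup ∧
  l.Chain' (fun a b => G.tgt a = G.src b) ∧
  ∀ h : l ≠ [], G.tgt (l.getLast h) = G.src (l.head h)

def StronglyConnected (G : Multidigraph V E) : Prop :=
  ∀ a b : V, Relation.ReflTransGen (G.Rel Set.univ) a b

def Connected (G : Multidigraph V E) : Prop :=
  ∀ a b : V, Relation.ReflTransGen G.URel a b

/-- Incidence matrix of a multidigraph. -/
def incidence [DecidableEq V] (G : Multidigraph V E) : Matrix V E ℝ := fun v e =>
  if G.tgt e = v ∧ G.src e ≠ v then 1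
  else if G.src e = v ∧ G.tgt e ≠ v then (-1 : ℝ) else 0

end Multidigraph

open scoped Classical

namespace Multidigraph
variable {V E : Type*}

inductive Walk (G : Multidigraph V E) : V → V → List E → Prop
  | nil (a : V) : Walk G a a []
  | cons {b c : V} (e : E) {l : List E} (h : G.src e = b) (hw : Walk G (G.tgt e) c l) :
      Walk G b c (e :: l)

theorem Walk.append {G : Multidigraph V E} {a b c : V} {l₁ l₂ : List E}
    (h₁ : G.Walk a b l₁) (h₂ : G.Walk b c l₂) : G.Walk a c (l₁ ++ l₂) := by
  induction h₁ with
  | nil => simpa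
  | cons e h hw ih => exact Walk.cons e h (ih h₂)

theorem Walk.split {G : Multidigraph V E} {a c : V} {l₁ l₂ : List E}
    (h : G.Walk a c (l₁ ++ l₂)) : ∃ b, G.Walk a b l₁ ∧ G.Walk b c l₂ := by
  induction l₁ generalizing a with
  | nil => exact ⟨a, Walk.nil a, by simpa using h⟩
  | cons e l ih =>
    rcases h with _ | ⟨e, he, hw⟩
    obtain ⟨b, hb1, hb2⟩ := ih hw
    exact ⟨b, Walk.cons e he hb1, hb2⟩

theorem Walk.head_src {G : Multidigraph V E} {a c : V} {e : E} {l : List E}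
    (h : G.Walk a c (e :: l)) : G.src e = a := by
  rcases h with _ | ⟨e, he, hw⟩; exact he

theorem Walk.chain' {G : Multidigraph V E} {a c : V} {l : List E}
    (h : G.Walk a c l) : l.Chain' (fun a b => G.tgt a = G.src b) := by
  induction h with
  | nil => exact List.IsChain.nil
  | cons e he hw ih =>
    rename_i b c' l'
    cases l' with
    | nil => exact List.IsChain.singleton _
    | cons e' l'' => exact List.IsChain.cons_cons (hw.head_src).symm ih

theorem Walk.getLast_tgt {G : Multidigraph V E} {a c : V} {l : List E}
    (h : G.Walk a c l) (hl : l ≠ []) : G.tgt (l.getLast hl) = c := by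
  induction h with
  | nil => simp at hl
  | cons e he hw ih =>
    rename_i b c' l'
    cases l' with
    | nil =>
      cases hw
      simp
    | cons e' l'' => rw [List.getLast_cons (by simp)]; exact ih (by simp)

theorem walk_of_chain {G : Multidigraph V E} :
    ∀ (l : List E) (hl : l ≠ []), l.Chain' (fun a b => G.tgt a = G.src b) →
      G.Walk (G.src (l.head hl)) (G.tgt (l.getLast hl)) l := by
  intro l
  induction l with
  | nil => simp
  | cons e l ih =>
    intro _ hc
    cases l with
    | nil => exact Walk.cons e rfl (by simpa using Walk.nil (G.tgt e))
    | cons e' l' =>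
      rcases hc with _ | _ | ⟨hte, hc'⟩
      have := ih (by simp) hc'
      rw [List.getLast_cons (by simp)]
      exact Walk.cons e rfl (by simpa [hte] using this)

theorem exists_walk {G : Multidigraph V E} (hG : G.StronglyConnected) (a b : V) :
    ∃ l, G.Walk a b l := by
  have h := hG a b
  induction h with
  | refl => exact ⟨[], Walk.nil a⟩
  | tail _ hr ih =>
    obtain ⟨l, hl⟩ := ih
    obtain ⟨e, -, he1, he2⟩ := hr
    exact ⟨l ++ [e], hl.append (Walk.cons e he1 (he2 ▸ Walk.nil _))⟩

theorem Walk.telescope {G : Multidigraph V E} (f : V → ℝ) {a c : V} {l : List E}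
    (h : G.Walk a c l) :
    (l.map (fun e => f (G.tgt e) - f (G.src e))).sum = f c - f a := by
  induction h with
  | nil => simp
  | cons e he hw ih =>
    subst he
    simp only [List.map_cons, List.sum_cons, ih]
    ring

theorem closed_walk_sum_zero {G : Multidigraph V E} (x : E → ℝ)
    (hx : ∀ l : List E, G.IsCycle l → (l.map x).sum = 0) :
    ∀ (n : ℕ) (l : List E), l.length = n → ∀ a, G.Walk a a l → (l.map x).sum = 0 := by
  intro n
  induction n using Nat.strong_induction_on with
  | _ n ih =>
    intro l hlen a hw
    by_cases hnd : (l.map G.src).Nodup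
    · rcases eq_or_ne l [] with rfl | hne
      · simp
      · apply hx
        refine ⟨hne, hnd, hw.chain', fun h => ?_⟩
        rw [hw.getLast_tgt h]
        cases l with
        | nil => exact absurd rfl hne
        | cons e l' => exact (hw.head_src).symm
    · rw [List.nodup_iff_injective_get] at hnd
      simp only [Function.Injective, not_forall] at hnd
      obtain ⟨i, j, hget, hij⟩ := hnd
      have key : ∃ p q : ℕ, ∃ (hp : p < l.length) (hq : q < l.length), p < q ∧
          G.src (l.get ⟨p, hp⟩) = G.src (l.get ⟨q, hq⟩) := by
        have hi : (i : ℕ) < l.length := by have := i.2; simpa using this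
        have hj : (j : ℕ) < l.length := by have := j.2; simpa using this
        have hne' : (i : ℕ) ≠ (j : ℕ) := fun h => hij (Fin.ext h)
        have hval : G.src (l.get ⟨i, hi⟩) = G.src (l.get ⟨j, hj⟩) := by
          have h1 : (l.map G.src).get i = G.src (l.get ⟨i, hi⟩) := by
            simp [List.getElem_map]
          have h2 : (l.map G.src).get j = G.src (l.get ⟨j, hj⟩) := by
            simp [List.getElem_map]
          rw [← h1, ← h2, hget]
        rcases Nat.lt_or_ge (i : ℕ) (j : ℕ) with h | h
        · exact ⟨i, j, hi, hj, h, hval⟩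
        · exact ⟨j, i, hj, hi, by omega, hval.symm⟩
      obtain ⟨p, q, hp, hq, hpq, hsrc⟩ := key
      set A := l.take p with hA
      set B := (l.take q).drop p with hB
      set C := l.drop q with hC
      have hAB : A ++ B = l.take q := by
        rw [hA, hB]
        conv_lhs => rw [show List.take p l = List.take p (List.take q l) by
          rw [List.take_take, min_eq_left hpq.le]]
        exact List.take_append_drop _ _
      have hl : l = A ++ B ++ C := by rw [hAB, hC, List.take_append_drop]
      have hw' : G.Walk a a (A ++ B ++ C) := hl ▸ hw
      obtain ⟨m, hm, hCw⟩ := hw'.split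
      obtain ⟨m₂, hAw, hBw⟩ := hm.split
      have hCeq : C = l.get ⟨q, hq⟩ :: l.drop (q + 1) := by
        rw [hC, List.drop_eq_getElem_cons hq]; rfl
      have hmv : G.src (l.get ⟨q, hq⟩) = m := (hCeq ▸ hCw).head_src
      have hBlen : p < (l.take q).length := by
        rw [List.length_take]; omega
      have hBeq : B = l.get ⟨p, hp⟩ :: (l.take q).drop (p + 1) := by
        rw [hB, List.drop_eq_getElem_cons hBlen]
        congr 1
        simp [List.getElem_take]
      have hm2 : G.src (l.get ⟨p, hp⟩) = m₂ := (hBeq ▸ hBw).head_src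
      have hmm : m₂ = m := by rw [← hm2, ← hmv, hsrc]
      subst hmm
      have hlenA : A.length = p := by rw [hA, List.length_take]; omega
      have hlenB : B.length = q - p := by rw [hB, List.length_drop, List.length_take]; omega
      have hlenC : C.length = l.length - q := by rw [hC, List.length_drop]
      have hsumB : (B.map x).sum = 0 :=
        ih (q - p) (by omega) B hlenB m₂ hBw
      have hsumAC : ((A ++ C).map x).sum = 0 :=
        ih (p + (l.length - q)) (by omega) (A ++ C)
          (by rw [List.length_append, hlenA, hlenC]) a (hAw.append hCw)
      rw [hl]
      simp only [List.map_append, List.sum_append] at hsumAC ⊢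
      linarith

theorem sum_indicator [Fintype E] {l : List E} (hl : l.Nodup) (x : E → ℝ) :
    (∑ e : E, (if e ∈ l then (1:ℝ) else 0) * x e) = (l.map x).sum := by
  classical
  have h1 : ∀ e : E, (if e ∈ l then (1:ℝ) else 0) * x e
      = if e ∈ l.toFinset then x e else 0 := by
    intro e; by_cases h : e ∈ l <;> simp [h]
  rw [Finset.sum_congr rfl (fun e _ => h1 e), Finset.sum_ite_mem, Finset.univ_inter,
    List.sum_toFinset x hl]

theorem incidence_transpose_apply {V E : Type*} [Fintype V] [DecidableEq V]
    (G : Multidigraph V E) (f : V → ℝ) (e : E) :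
    (G.incidence.transpose.mulVec f) e = f (G.tgt e) - f (G.src e) := by
  classical
  simp only [Matrix.mulVec, dotProduct, Matrix.transpose_apply]
  by_cases hst : G.src e = G.tgt e
  · have h0 : ∀ v, G.incidence v e * f v = 0 := by
      intro v
      have h00 : G.incidence v e = 0 := by simp [incidence, hst]
      rw [h00, zero_mul]
    simp [h0, hst]
  · have hrw : ∀ v, G.incidence v e * f v
        = (if G.tgt e = v then f v else 0) - (if G.src e = v then f v else 0) := by
      intro v
      by_cases h1 : G.tgt e = v <;> by_cases h2 : G.src e = v <;>
        simp only [incidence, h1, h2] <;> simp_all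
    rw [Finset.sum_congr rfl (fun v _ => hrw v), Finset.sum_sub_distrib,
      Finset.sum_ite_eq, Finset.sum_ite_eq]
    simp

theorem cycle_walk {V E : Type*} {G : Multidigraph V E} {l : List E} (hl : G.IsCycle l) :
    ∃ a, G.Walk a a l := by
  obtain ⟨hne, hnd, hch, hcl⟩ := hl
  refine ⟨G.src (l.head hne), ?_⟩
  have := walk_of_chain l hne hch
  rwa [hcl hne] at this

end Multidigraph


/-- The cycle-indicator matrix `H`: rows indexed by the (elementary) cycles of
`G`, columns by edges; entry 1 if the edge belongs to the cycle, 0 otherwise. -/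
noncomputable def cycleMatrix {V E : Type} (G : Multidigraph V E) :
    Matrix {l : List E // G.IsCycle l} E ℝ :=
  fun σ e => if e ∈ σ.val then 1 else 0

/-- For a strongly connected multidigraph, `ker H = im Cᵗ`. -/
theorem stmt1 {V E : Type} [Fintype V] [Fintype E] [DecidableEq V]
    (G : Multidigraph V E) (hG : G.StronglyConnected) :
    LinearMap.ker (Matrix.mulVecLin (cycleMatrix G))
      = LinearMap.range (Matrix.mulVecLin (G.incidence).transpose) := by
  ext x
  simp only [LinearMap.mem_ker, LinearMap.mem_range, Matrix.mulVecLin_apply]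
  constructor
  · intro hx
    have hcyc : ∀ l : List E, G.IsCycle l → (l.map x).sum = 0 := by
      intro l hl
      have h := congrFun hx ⟨l, hl⟩
      simp only [Matrix.mulVec, dotProduct, Pi.zero_apply, cycleMatrix] at h
      rwa [Multidigraph.sum_indicator (List.Nodup.of_map _ hl.2.1) x] at h
    cases isEmpty_or_nonempty V with
    | inl hemp =>
      haveI : IsEmpty E := ⟨fun e => hemp.false (G.src e)⟩
      exact ⟨0, funext fun e => isEmptyElim e⟩
    | inr hne =>
      obtain ⟨r⟩ := hne
      choose w hwalk using Multidigraph.exists_walk hG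
      refine ⟨fun v => ((w r v).map x).sum, funext fun e => ?_⟩
      rw [Multidigraph.incidence_transpose_apply]
      obtain ⟨q, hq⟩ := Multidigraph.exists_walk hG (G.tgt e) r
      have h1 : (((w r (G.src e)) ++ e :: q).map x).sum = 0 :=
        Multidigraph.closed_walk_sum_zero x hcyc _ _ rfl r
          ((hwalk r (G.src e)).append (Multidigraph.Walk.cons e rfl hq))
      have h2 : (((w r (G.tgt e)) ++ q).map x).sum = 0 :=
        Multidigraph.closed_walk_sum_zero x hcyc _ _ rfl r
          ((hwalk r (G.tgt e)).append hq)
      simp only [List.map_append, List.sum_append, List.map_cons, List.sum_cons] at h1 h2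
      linarith
  · rintro ⟨f, rfl⟩
    funext σ
    obtain ⟨l, hl⟩ := σ
    set y := G.incidence.transpose.mulVec f with hy
    simp only [Matrix.mulVec, dotProduct, Pi.zero_apply, cycleMatrix]
    rw [Multidigraph.sum_indicator (List.Nodup.of_map _ hl.2.1)]
    obtain ⟨a, hw⟩ := Multidigraph.cycle_walk hl
    have hmap : l.map y = l.map (fun e => f (G.tgt e) - f (G.src e)) :=
      List.map_congr_left fun e _ => by
        rw [hy]; exact Multidigraph.incidence_transpose_apply G f e
    rw [hmap, hw.telescope f, sub_self]
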